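/- Let A be a complete normed ring with unit 1, R : ℝ → A Bochner measurable, β : ℝ → ℝ integrable on all of ℝ with ‖R(τ)‖ ≤ β(τ) a.e., and Q(t,0) the Dyson series with base point 0. Then the limit Q₊ := lim_{t→+∞} Q(t,0) exists in the norm of A; likewise the limit Q₋ := lim_{t→−∞} Q(t,0) exists in the norm of A. -/

import Mathlib

open MeasureTheory intervalIntegral Filter Topology

/-- The `k`-fold time-ordered iterated Bochner integral
`∫_s^t R(t₁) (∫_s^{t₁} R(t₂) ( ⋯ (∫_s^{t_{k−1}} R(t_k) dt_k) ⋯ ) dt₂) dt₁`. -/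
noncomputable def timeOrderedIntegral {A : Type*} [NormedRing A] [NormedSpace ℝ A]
    (f : ℝ → A) (s : ℝ) : ℕ → ℝ → A
  | 0, _ => 1
  | k + 1, t => ∫ τ in s..t, f τ * timeOrderedIntegral f s k τ

/-- The Dyson series
`Q(t,s) = 1 + Σ_{k≥1} i^k ∫_s^t R(t₁) ∫_s^{t₁} R(t₂) ⋯ ∫_s^{t_{k−1}} R(t_k) dt_k ⋯ dt₁`. -/
noncomputable def dyson {A : Type*} [NormedRing A] [NormedAlgebra ℂ A]
    (R : ℝ → A) (s t : ℝ) : A :=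
  1 + ∑' k : ℕ, (Complex.I ^ (k + 1)) • timeOrderedIntegral R s (k + 1) t

private lemma keyPos {b : ℝ → ℝ} (hb : Integrable b (volume : Measure ℝ))
    (hb0 : ∀ x, 0 ≤ b x) (k : ℕ) {t : ℝ} (ht : 0 ≤ t) :
    (∫ τ in (0:ℝ)..t, b τ * (∫ x in (0:ℝ)..τ, b x) ^ k)
      ≤ (∫ x in (0:ℝ)..t, b x) ^ (k + 1) / ((k : ℝ) + 1) := by
  set Φ : ℝ → ℝ := fun τ => ∫ x in (0:ℝ)..τ, b x with hΦdef
  have hΦcont : Continuous Φ := hb.continuous_primitive 0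
  have hΦmono : Monotone Φ := by
    intro x y hxy
    have h1 : Φ y - Φ x = ∫ τ in x..y, b τ :=
      integral_interval_sub_left hb.intervalIntegrable hb.intervalIntegrable
    have h2 : 0 ≤ ∫ τ in x..y, b τ :=
      intervalIntegral.integral_nonneg hxy fun u _ => hb0 u
    linarith
  have hΦ0 : Φ 0 = 0 := intervalIntegral.integral_same
  have hΦnonneg : ∀ x, 0 ≤ x → 0 ≤ Φ x := fun x hx => hΦ0 ▸ hΦmono hx
  have hq : ∀ a c : ℝ, IntervalIntegrable (fun τ => b τ * Φ τ ^ k) volume a c :=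
    fun a c => (hb.intervalIntegrable).mul_continuousOn (hΦcont.pow k).continuousOn
  refine le_of_forall_pos_le_add fun ε hε => ?_
  have hΦt : 0 ≤ Φ t := hΦnonneg t ht
  have hM0 : (0:ℝ) < Φ t ^ k + 1 := by have := pow_nonneg hΦt k; linarith
  set M : ℝ := Φ t ^ k + 1 with hMdef
  set ε' : ℝ := ε / M with hε'def
  have hε'0 : 0 < ε' := div_pos hε hM0
  obtain ⟨δ, hδ0, hδ⟩ := Metric.uniformContinuousOn_iff.mp
    ((isCompact_Icc (a := (0:ℝ)) (b := t)).uniformContinuousOn_of_continuous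
      hΦcont.continuousOn) ε' hε'0
  obtain ⟨n, hn⟩ := exists_nat_gt (t / δ)
  have hn0 : 0 < (n : ℝ) := lt_of_le_of_lt (div_nonneg ht hδ0.le) hn
  have htn : t / n < δ := by
    rw [div_lt_iff₀ hn0]
    have := (div_lt_iff₀ hδ0).mp hn
    linarith [(div_lt_iff₀ hδ0).mp hn]
  have htn0 : 0 ≤ t / n := div_nonneg ht hn0.le
  set σ : ℕ → ℝ := fun i => i * (t / n) with hσdef
  have hσ0 : σ 0 = 0 := by simp [hσdef]
  have hσn : σ n = t := by
    simp only [hσdef]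
    field_simp
  have hσle : ∀ i j : ℕ, i ≤ j → σ i ≤ σ j := fun i j hij => by
    have : (i : ℝ) ≤ j := by exact_mod_cast hij
    exact mul_le_mul_of_nonneg_right this htn0
  have hσnonneg : ∀ i, 0 ≤ σ i := fun i => hσ0 ▸ hσle 0 i (Nat.zero_le i)
  have hσmem : ∀ i, i ≤ n → σ i ∈ Set.Icc (0:ℝ) t := fun i hi =>
    ⟨hσnonneg i, hσn ▸ hσle i n hi⟩
  have hstep : ∀ i, i < n →
      (∫ τ in σ i..σ (i+1), b τ * Φ τ ^ k)
        ≤ (Φ (σ (i+1)) ^ (k+1) - Φ (σ i) ^ (k+1)) / ((k:ℝ)+1)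
          + ε' * (Φ (σ (i+1)) ^ k - Φ (σ i) ^ k) := by
    intro i hi
    have hle : σ i ≤ σ (i+1) := hσle i (i+1) (Nat.le_succ i)
    have hyx : Φ (σ i) ≤ Φ (σ (i+1)) := hΦmono hle
    have hy0 : 0 ≤ Φ (σ i) := hΦnonneg _ (hσnonneg i)
    have hx0 : 0 ≤ Φ (σ (i+1)) := hy0.trans hyx
    have hd : dist (σ (i+1)) (σ i) < δ := by
      rw [Real.dist_eq]
      have hdiff : σ (i+1) - σ i = t / n := by
        simp only [hσdef]; push_cast; ring
      rw [hdiff, abs_of_nonneg htn0]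
      exact htn
    have hxy : Φ (σ (i+1)) - Φ (σ i) ≤ ε' := by
      have := hδ _ (hσmem (i+1) hi) _ (hσmem i hi.le) hd
      rw [Real.dist_eq, abs_of_nonneg (sub_nonneg.2 hyx)] at this
      exact this.le
    have h1 : (∫ τ in σ i..σ (i+1), b τ * Φ τ ^ k)
        ≤ ∫ τ in σ i..σ (i+1), b τ * Φ (σ (i+1)) ^ k := by
      refine intervalIntegral.integral_mono_on hle (hq _ _)
        ((hb.intervalIntegrable).mul_const _) fun τ hτ => ?_
      have hτ0 : 0 ≤ Φ τ := hΦnonneg τ ((hσnonneg i).trans hτ.1)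
      exact mul_le_mul_of_nonneg_left
        (pow_le_pow_left₀ hτ0 (hΦmono hτ.2) k) (hb0 τ)
    have h2 : (∫ τ in σ i..σ (i+1), b τ * Φ (σ (i+1)) ^ k)
        = (Φ (σ (i+1)) - Φ (σ i)) * Φ (σ (i+1)) ^ k := by
      rw [intervalIntegral.integral_mul_const,
        integral_interval_sub_left hb.intervalIntegrable hb.intervalIntegrable]
    set x := Φ (σ (i+1))
    set y := Φ (σ i)
    have hgeom : (∑ j ∈ Finset.range (k+1), x ^ j * y ^ (k - j)) * (x - y)
        = x ^ (k+1) - y ^ (k+1) := geom_sum₂_mul x y (k+1)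
    have hterm : ∀ j ∈ Finset.range (k+1), y ^ k ≤ x ^ j * y ^ (k - j) := by
      intro j hj
      have hjk : j ≤ k := Nat.lt_succ_iff.mp (Finset.mem_range.mp hj)
      calc y ^ k = y ^ j * y ^ (k - j) := by rw [← pow_add]; congr 1; omega
        _ ≤ x ^ j * y ^ (k - j) :=
          mul_le_mul_of_nonneg_right (pow_le_pow_left₀ hy0 hyx j) (pow_nonneg hy0 _)
    have hsum : ((k:ℝ)+1) * y ^ k ≤ ∑ j ∈ Finset.range (k+1), x ^ j * y ^ (k - j) := by
      calc ((k:ℝ)+1) * y ^ k = ∑ _j ∈ Finset.range (k+1), y ^ k := by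
            rw [Finset.sum_const, Finset.card_range, nsmul_eq_mul]; push_cast; ring
        _ ≤ _ := Finset.sum_le_sum hterm
    have h3 : ((k:ℝ)+1) * (y ^ k * (x - y)) ≤ x ^ (k+1) - y ^ (k+1) := by
      rw [← hgeom]
      have := mul_le_mul_of_nonneg_right hsum (sub_nonneg.2 hyx)
      linarith [this]
    have h4 : y ^ k * (x - y) ≤ (x ^ (k+1) - y ^ (k+1)) / ((k:ℝ)+1) := by
      rw [le_div_iff₀ (by positivity : (0:ℝ) < (k:ℝ)+1)]
      linarith
    have h5 : (x ^ k - y ^ k) * (x - y) ≤ ε' * (x ^ k - y ^ k) := by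
      have hp : 0 ≤ x ^ k - y ^ k := sub_nonneg.2 (pow_le_pow_left₀ hy0 hyx k)
      calc (x ^ k - y ^ k) * (x - y) ≤ (x ^ k - y ^ k) * ε' :=
            mul_le_mul_of_nonneg_left hxy hp
        _ = ε' * (x ^ k - y ^ k) := mul_comm _ _
    have hid : (x - y) * x ^ k = y ^ k * (x - y) + (x ^ k - y ^ k) * (x - y) := by ring
    calc (∫ τ in σ i..σ (i+1), b τ * Φ τ ^ k) ≤ (x - y) * x ^ k := by rw [← h2]; exact h1
      _ ≤ (x ^ (k+1) - y ^ (k+1)) / ((k:ℝ)+1) + ε' * (x ^ k - y ^ k) := by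
          rw [hid]; exact add_le_add h4 h5
  have hsplit : (∫ τ in (0:ℝ)..t, b τ * Φ τ ^ k)
      = ∑ i ∈ Finset.range n, ∫ τ in σ i..σ (i+1), b τ * Φ τ ^ k := by
    rw [intervalIntegral.sum_integral_adjacent_intervals (fun i _ => hq _ _), hσ0, hσn]
  have htele1 : ∑ i ∈ Finset.range n, (Φ (σ (i+1)) ^ (k+1) - Φ (σ i) ^ (k+1))
      = Φ t ^ (k+1) - 0 := by
    rw [Finset.sum_range_sub (fun i => Φ (σ i) ^ (k+1)), hσ0, hσn, hΦ0,
      zero_pow (Nat.succ_ne_zero k)]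
  have htele2 : ∑ i ∈ Finset.range n, (Φ (σ (i+1)) ^ k - Φ (σ i) ^ k)
      = Φ t ^ k - 0 ^ k := by
    rw [Finset.sum_range_sub (fun i => Φ (σ i) ^ k), hσ0, hσn, hΦ0]
  have hfinal : ε' * (Φ t ^ k - 0 ^ k) ≤ ε := by
    have h0k : (0:ℝ) ≤ (0:ℝ) ^ k := by positivity
    have h1 : ε' * (Φ t ^ k - 0 ^ k) ≤ ε' * Φ t ^ k := by nlinarith
    have h2 : ε' * Φ t ^ k ≤ ε := by
      rw [hε'def, div_mul_eq_mul_div, div_le_iff₀ hM0]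
      have : Φ t ^ k ≤ M := by rw [hMdef]; linarith
      nlinarith
    linarith
  calc (∫ τ in (0:ℝ)..t, b τ * Φ τ ^ k)
      = ∑ i ∈ Finset.range n, ∫ τ in σ i..σ (i+1), b τ * Φ τ ^ k := hsplit
    _ ≤ ∑ i ∈ Finset.range n, ((Φ (σ (i+1)) ^ (k+1) - Φ (σ i) ^ (k+1)) / ((k:ℝ)+1)
          + ε' * (Φ (σ (i+1)) ^ k - Φ (σ i) ^ k)) :=
        Finset.sum_le_sum fun i hi => hstep i (Finset.mem_range.mp hi)
    _ = (Φ t ^ (k+1) - 0) / ((k:ℝ)+1) + ε' * (Φ t ^ k - 0 ^ k) := by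
        rw [Finset.sum_add_distrib, ← Finset.sum_div, ← Finset.mul_sum, htele1, htele2]
    _ ≤ Φ t ^ (k+1) / ((k:ℝ)+1) + ε := by
        rw [sub_zero]; exact add_le_add le_rfl hfinal

private lemma uIoc_int_eq_pos {b : ℝ → ℝ} {τ : ℝ} (hτ : 0 ≤ τ) :
    (∫ x in Set.uIoc 0 τ, b x) = ∫ x in (0:ℝ)..τ, b x := by
  rw [Set.uIoc_of_le hτ, ← intervalIntegral.integral_of_le hτ]

private lemma uIoc_int_eq_neg {b : ℝ → ℝ} {τ : ℝ} (hτ : τ ≤ 0) :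
    (∫ x in Set.uIoc 0 τ, b x) = ∫ x in (0:ℝ)..(-τ), b (-x) := by
  rw [intervalIntegral.integral_comp_neg, neg_neg, neg_zero,
    Set.uIoc_of_ge hτ, intervalIntegral.integral_of_le hτ]

private lemma keyGen' {b : ℝ → ℝ} (hb : Integrable b (volume : Measure ℝ))
    (hb0 : ∀ x, 0 ≤ b x) (k : ℕ) (t : ℝ) :
    (∫ τ in Set.uIoc 0 t, b τ * (∫ x in Set.uIoc 0 τ, b x) ^ k)
      ≤ (∫ x in Set.uIoc 0 t, b x) ^ (k + 1) / ((k : ℝ) + 1) := by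
  rcases le_total 0 t with ht | ht
  · rw [Set.uIoc_of_le ht]
    have hcongr : (∫ τ in Set.Ioc 0 t, b τ * (∫ x in Set.uIoc 0 τ, b x) ^ k)
        = ∫ τ in Set.Ioc 0 t, b τ * (∫ x in (0:ℝ)..τ, b x) ^ k := by
      refine setIntegral_congr_fun measurableSet_Ioc fun τ hτ => ?_
      rw [uIoc_int_eq_pos hτ.1.le]
    rw [hcongr, ← intervalIntegral.integral_of_le ht, ← intervalIntegral.integral_of_le ht]
    exact keyPos hb hb0 k ht
  · have hnt : (0:ℝ) ≤ -t := neg_nonneg.2 ht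
    rw [Set.uIoc_of_ge ht]
    have hRR : (∫ x in Set.Ioc t 0, b x) = ∫ x in (0:ℝ)..(-t), b (-x) := by
      rw [← Set.uIoc_of_ge ht]; exact uIoc_int_eq_neg ht
    have hcongr : (∫ τ in Set.Ioc t 0, b τ * (∫ x in Set.uIoc 0 τ, b x) ^ k)
        = ∫ τ in Set.Ioc t 0, b τ * (∫ x in (0:ℝ)..(-τ), b (-x)) ^ k := by
      refine setIntegral_congr_fun measurableSet_Ioc fun τ hτ => ?_
      rw [uIoc_int_eq_neg hτ.2]
    rw [hcongr, hRR, ← intervalIntegral.integral_of_le ht]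
    have hflip : (∫ τ in t..(0:ℝ), b τ * (∫ x in (0:ℝ)..(-τ), b (-x)) ^ k)
        = ∫ u in (0:ℝ)..(-t), b (-u) * (∫ x in (0:ℝ)..(-(-u)), b (-x)) ^ k := by
      rw [intervalIntegral.integral_comp_neg
        (f := fun τ => b τ * (∫ x in (0:ℝ)..(-τ), b (-x)) ^ k), neg_neg, neg_zero]
    rw [hflip]
    have hcongr2 : (∫ u in (0:ℝ)..(-t), b (-u) * (∫ x in (0:ℝ)..(-(-u)), b (-x)) ^ k)
        = ∫ u in (0:ℝ)..(-t), b (-u) * (∫ x in (0:ℝ)..u, b (-x)) ^ k := by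
      congr 1; funext u; rw [neg_neg]
    rw [hcongr2]
    exact keyPos hb.comp_neg (fun x => hb0 _) k hnt

private lemma toi_bound {A : Type*} [NormedRing A] [NormedSpace ℝ A]
    {R : ℝ → A} {b : ℝ → ℝ} (hR : AEStronglyMeasurable R (volume : Measure ℝ))
    (hb : Integrable b (volume : Measure ℝ)) (hb0 : ∀ x, 0 ≤ b x)
    (hRb : ∀ᵐ τ ∂(volume : Measure ℝ), ‖R τ‖ ≤ b τ) (k : ℕ) :
    Continuous (timeOrderedIntegral R 0 k) ∧
      ∀ t, ‖timeOrderedIntegral R 0 k t‖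
        ≤ ‖(1:A)‖ * (∫ τ in Set.uIoc 0 t, b τ) ^ k / (k.factorial : ℝ) := by
  have hΨ0 : ∀ t, (0:ℝ) ≤ ∫ τ in Set.uIoc 0 t, b τ := fun t =>
    setIntegral_nonneg measurableSet_uIoc fun x _ => hb0 x
  have hΨB : ∀ t, (∫ τ in Set.uIoc 0 t, b τ) ≤ ∫ τ, b τ := fun t =>
    setIntegral_le_integral hb (Filter.Eventually.of_forall hb0)
  have hΨB0 : (0:ℝ) ≤ ∫ τ, b τ := integral_nonneg hb0
  induction k with
  | zero =>
    refine ⟨continuous_const, fun t => ?_⟩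
    show ‖(1:A)‖ ≤ _
    simp
  | succ k ih =>
    obtain ⟨ihc, ihb⟩ := ih
    set g := timeOrderedIntegral R 0 k with hg
    have hmeas : AEStronglyMeasurable (fun τ => R τ * g τ) volume :=
      hR.mul ihc.aestronglyMeasurable
    have hfac0 : (0:ℝ) < (k.factorial : ℝ) := by positivity
    have hint : Integrable (fun τ => R τ * g τ) volume := by
      refine Integrable.mono'
        (hb.mul_const (‖(1:A)‖ * (∫ τ, b τ) ^ k / (k.factorial : ℝ))) hmeas ?_
      filter_upwards [hRb] with τ hτ
      calc ‖R τ * g τ‖ ≤ ‖R τ‖ * ‖g τ‖ := norm_mul_le _ _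
        _ ≤ b τ * (‖(1:A)‖ * (∫ x in Set.uIoc 0 τ, b x) ^ k / (k.factorial : ℝ)) :=
            mul_le_mul hτ (ihb τ) (norm_nonneg _) (hb0 τ)
        _ ≤ b τ * (‖(1:A)‖ * (∫ τ, b τ) ^ k / (k.factorial : ℝ)) := by
            exact mul_le_mul_of_nonneg_left (div_le_div_of_nonneg_right
              (mul_le_mul_of_nonneg_left (pow_le_pow_left₀ (hΨ0 τ) (hΨB τ) k) (norm_nonneg _))
              hfac0.le) (hb0 τ)
    have hcont : Continuous (timeOrderedIntegral R 0 (k+1)) := by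
      have hdef : timeOrderedIntegral R 0 (k+1) = fun t => ∫ τ in (0:ℝ)..t, R τ * g τ := rfl
      rw [hdef]
      exact hint.continuous_primitive 0
    refine ⟨hcont, fun t => ?_⟩
    have hΨcont : Continuous (fun τ => ∫ x in Set.uIoc 0 τ, b x) := by
      have habs : (fun τ => ∫ x in Set.uIoc 0 τ, b x)
          = fun τ => |∫ x in (0:ℝ)..τ, b x| := by
        funext τ
        rcases le_total 0 τ with h | h
        · rw [uIoc_int_eq_pos h,
            abs_of_nonneg (intervalIntegral.integral_nonneg h fun u _ => hb0 u)]
        · rw [Set.uIoc_of_ge h, ← intervalIntegral.integral_of_le h,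
            intervalIntegral.integral_symm τ 0, abs_neg,
            abs_of_nonneg (intervalIntegral.integral_nonneg h fun u _ => hb0 u)]
      rw [habs]
      exact (hb.continuous_primitive 0).abs
    have hRHScont : Continuous
        (fun τ => ‖(1:A)‖ * (∫ x in Set.uIoc 0 τ, b x) ^ k / (k.factorial : ℝ)) :=
      (continuous_const.mul (hΨcont.pow k)).div_const _
    have hRHSint : IntegrableOn
        (fun τ => b τ * (‖(1:A)‖ * (∫ x in Set.uIoc 0 τ, b x) ^ k / (k.factorial : ℝ)))
        (Set.uIoc 0 t) volume :=
      intervalIntegrable_iff.mp ((hb.intervalIntegrable).mul_continuousOn hRHScont.continuousOn)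
    have h1 : ‖timeOrderedIntegral R 0 (k+1) t‖ ≤ ∫ τ in Set.uIoc 0 t, ‖R τ * g τ‖ :=
      intervalIntegral.norm_integral_le_integral_norm_uIoc
    have h2 : (∫ τ in Set.uIoc 0 t, ‖R τ * g τ‖)
        ≤ ∫ τ in Set.uIoc 0 t,
            b τ * (‖(1:A)‖ * (∫ x in Set.uIoc 0 τ, b x) ^ k / (k.factorial : ℝ)) := by
      refine setIntegral_mono_ae hint.norm.integrableOn hRHSint ?_
      filter_upwards [hRb] with τ hτ
      calc ‖R τ * g τ‖ ≤ ‖R τ‖ * ‖g τ‖ := norm_mul_le _ _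
        _ ≤ b τ * (‖(1:A)‖ * (∫ x in Set.uIoc 0 τ, b x) ^ k / (k.factorial : ℝ)) :=
            mul_le_mul hτ (ihb τ) (norm_nonneg _) (hb0 τ)
    have hring : ∀ τ : ℝ,
        b τ * (‖(1:A)‖ * (∫ x in Set.uIoc 0 τ, b x) ^ k / (k.factorial : ℝ))
          = (‖(1:A)‖ / (k.factorial : ℝ)) * (b τ * (∫ x in Set.uIoc 0 τ, b x) ^ k) :=
      fun τ => by ring
    have h4 : (∫ τ in Set.uIoc 0 t,
          b τ * (‖(1:A)‖ * (∫ x in Set.uIoc 0 τ, b x) ^ k / (k.factorial : ℝ)))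
        = (‖(1:A)‖ / (k.factorial : ℝ))
            * ∫ τ in Set.uIoc 0 t, b τ * (∫ x in Set.uIoc 0 τ, b x) ^ k := by
      simp_rw [hring]
      exact MeasureTheory.integral_const_mul _ _
    have h5 := keyGen' hb hb0 k t
    have h6 : (‖(1:A)‖ / (k.factorial : ℝ))
          * (∫ τ in Set.uIoc 0 t, b τ * (∫ x in Set.uIoc 0 τ, b x) ^ k)
        ≤ (‖(1:A)‖ / (k.factorial : ℝ))
            * ((∫ x in Set.uIoc 0 t, b x) ^ (k+1) / ((k:ℝ)+1)) :=
      mul_le_mul_of_nonneg_left h5 (by positivity)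
    have h7 : (‖(1:A)‖ / (k.factorial : ℝ))
          * ((∫ x in Set.uIoc 0 t, b x) ^ (k+1) / ((k:ℝ)+1))
        = ‖(1:A)‖ * (∫ x in Set.uIoc 0 t, b x) ^ (k+1) / (((k+1).factorial : ℝ)) := by
      rw [Nat.factorial_succ]
      push_cast
      field_simp
    calc ‖timeOrderedIntegral R 0 (k+1) t‖
        ≤ ∫ τ in Set.uIoc 0 t, ‖R τ * g τ‖ := h1
      _ ≤ _ := h2
      _ = _ := h4
      _ ≤ _ := h6
      _ = _ := h7

theorem dyson_limits_exist
    {A : Type*} [NormedRing A] [NormedAlgebra ℂ A] [CompleteSpace A]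
    (R : ℝ → A) (β : ℝ → ℝ)
    (hR : AEStronglyMeasurable R (volume : Measure ℝ))
    (hβ : Integrable β (volume : Measure ℝ))
    (hRβ : ∀ᵐ τ ∂(volume : Measure ℝ), ‖R τ‖ ≤ β τ) :
    (∃ Qp : A, Tendsto (fun t : ℝ => dyson R 0 t) atTop (𝓝 Qp)) ∧
      (∃ Qm : A, Tendsto (fun t : ℝ => dyson R 0 t) atBot (𝓝 Qm)) := by
  set b : ℝ → ℝ := fun τ => |β τ| with hbdef
  have hb : Integrable b (volume : Measure ℝ) := hβ.abs
  have hb0 : ∀ x, 0 ≤ b x := fun x => abs_nonneg _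
  have hRb : ∀ᵐ τ ∂(volume : Measure ℝ), ‖R τ‖ ≤ b τ :=
    hRβ.mono fun τ h => h.trans (le_abs_self _)
  have H := fun k => toi_bound hR hb hb0 hRb k
  set g : ℕ → ℝ → A := fun k => timeOrderedIntegral R 0 k with hgdef
  set B : ℝ := ∫ τ, b τ with hBdef
  have hΨ0 : ∀ t : ℝ, (0:ℝ) ≤ ∫ τ in Set.uIoc 0 t, b τ := fun t =>
    setIntegral_nonneg measurableSet_uIoc fun x _ => hb0 x
  have hΨB : ∀ t : ℝ, (∫ τ in Set.uIoc 0 t, b τ) ≤ B := fun t =>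
    setIntegral_le_integral hb (Filter.Eventually.of_forall hb0)
  have hB0 : (0:ℝ) ≤ B := integral_nonneg hb0
  -- uniform bound
  have hbd : ∀ (k : ℕ) (t : ℝ), ‖g k t‖ ≤ ‖(1:A)‖ * B ^ k / (k.factorial : ℝ) := by
    intro k t
    refine ((H k).2 t).trans ?_
    gcongr
    exact hΨB t
  -- integrability of each integrand
  have hint : ∀ k : ℕ, Integrable (fun τ => R τ * g k τ) (volume : Measure ℝ) := by
    intro k
    refine Integrable.mono'
      (hb.mul_const (‖(1:A)‖ * B ^ k / (k.factorial : ℝ)))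
      (hR.mul (H k).1.aestronglyMeasurable) ?_
    filter_upwards [hRb] with τ hτ
    calc ‖R τ * g k τ‖ ≤ ‖R τ‖ * ‖g k τ‖ := norm_mul_le _ _
      _ ≤ b τ * (‖(1:A)‖ * B ^ k / (k.factorial : ℝ)) :=
          mul_le_mul hτ (hbd k τ) (norm_nonneg _) (hb0 τ)
  have hdefs : ∀ k : ℕ, g (k+1) = fun t => ∫ τ in (0:ℝ)..t, R τ * g k τ := fun k => rfl
  -- limits of each term
  have htop : ∀ k : ℕ, Tendsto (fun t => g (k+1) t) atTop
      (𝓝 (∫ τ in Set.Ioi 0, R τ * g k τ)) := by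
    intro k
    rw [hdefs k]
    exact MeasureTheory.intervalIntegral_tendsto_integral_Ioi 0
      ((hint k).integrableOn) tendsto_id
  have hbot : ∀ k : ℕ, Tendsto (fun t => g (k+1) t) atBot
      (𝓝 (-∫ τ in Set.Iic 0, R τ * g k τ)) := by
    intro k
    have h := (MeasureTheory.intervalIntegral_tendsto_integral_Iic 0
      ((hint k).integrableOn) tendsto_id).neg
    refine h.congr fun t => ?_
    rw [hdefs k]
    exact (intervalIntegral.integral_symm t 0).symm
  -- summable bound
  have hsum : Summable (fun k : ℕ => ‖(1:A)‖ * B ^ (k+1) / (((k+1).factorial : ℕ) : ℝ)) := by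
    have hs0 : Summable (fun n : ℕ => ‖(1:A)‖ * (B ^ n / (n.factorial : ℝ))) :=
      (Real.summable_pow_div_factorial B).mul_left _
    have hs1 := (summable_nat_add_iff 1).mpr hs0
    simpa [mul_div_assoc] using hs1
  have hnormI : ∀ k : ℕ, ‖Complex.I ^ (k+1)‖ = 1 := fun k => by simp
  have hbound : ∀ᶠ t : ℝ in ⊤, ∀ k : ℕ,
      ‖(Complex.I ^ (k + 1)) • g (k+1) t‖ ≤ ‖(1:A)‖ * B ^ (k+1) / (((k+1).factorial : ℕ) : ℝ) := by
    refine Filter.Eventually.of_forall fun t k => ?_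
    rw [norm_smul, hnormI k, one_mul]
    exact hbd (k+1) t
  constructor
  · refine ⟨1 + ∑' k : ℕ, (Complex.I ^ (k + 1)) • (∫ τ in Set.Ioi 0, R τ * g k τ), ?_⟩
    have : Tendsto (fun t : ℝ => ∑' k : ℕ, (Complex.I ^ (k + 1)) • g (k+1) t) atTop
        (𝓝 (∑' k : ℕ, (Complex.I ^ (k + 1)) • (∫ τ in Set.Ioi 0, R τ * g k τ))) := by
      refine tendsto_tsum_of_dominated_convergence hsum
        (fun k => (htop k).const_smul _) ?_
      exact Filter.Eventually.of_forall fun t k => by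
        rw [norm_smul, hnormI k, one_mul]; exact hbd (k+1) t
    exact Tendsto.const_add 1 this
  · refine ⟨1 + ∑' k : ℕ, (Complex.I ^ (k + 1)) • (-∫ τ in Set.Iic 0, R τ * g k τ), ?_⟩
    have : Tendsto (fun t : ℝ => ∑' k : ℕ, (Complex.I ^ (k + 1)) • g (k+1) t) atBot
        (𝓝 (∑' k : ℕ, (Complex.I ^ (k + 1)) • (-∫ τ in Set.Iic 0, R τ * g k τ))) := by
      refine tendsto_tsum_of_dominated_convergence hsum
        (fun k => (hbot k).const_smul _) ?_
      exact Filter.Eventually.of_forall fun t k => by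
        rw [norm_smul, hnormI k, one_mul]; exact hbd (k+1) t
    exact Tendsto.const_add 1 this
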